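/- The complete bipartite graph K_{2,3} is 2-monophilic: for every assignment of 2-element color lists to its five vertices, there exist at least two distinct proper colorings from the lists. -/
import Mathlib

open SimpleGraph

open Classical in
/-- Number of proper colorings of `G` from list assignment `L`: functions `γ` with
`γ v ∈ L v` for all `v` and `γ v ≠ γ w` for adjacent `v, w`. -/
noncomputable def colCount {V : Type*} [Fintype V] (G : SimpleGraph V) (L : V → Finset ℕ) : ℕ :=
  ((Fintype.piFinset L).filter fun γ => ∀ v w, G.Adj v w → γ v ≠ γ w).card


/-- `G` is `n`-monophilic: the constant assignment `{1,…,n}` minimizes the number of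
list colorings among all `n`-list assignments. -/
def Monophilic {V : Type*} [Fintype V] (G : SimpleGraph V) (n : ℕ) : Prop :=
  ∀ L : V → Finset ℕ, (∀ v, (L v).card = n) →
    colCount G (fun _ => Finset.Icc 1 n) ≤ colCount G L

section Aux

abbrev V5 := Fin 2 ⊕ Fin 3
abbrev G5 := completeBipartiteGraph (Fin 2) (Fin 3)

open Classical in
noncomputable def colSet (L : V5 → Finset ℕ) : Finset (V5 → ℕ) :=
  (Fintype.piFinset L).filter fun γ => ∀ v w, G5.Adj v w → γ v ≠ γ w

lemma colCount_eq (L : V5 → Finset ℕ) : colCount G5 L = (colSet L).card := by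
  unfold colCount colSet
  congr 1
  ext γ
  simp only [Finset.mem_filter, Fintype.mem_piFinset]

lemma mem_colSet_iff {L : V5 → Finset ℕ} {γ : V5 → ℕ} :
    γ ∈ colSet L ↔ (∀ v, γ v ∈ L v) ∧ ∀ v w, G5.Adj v w → γ v ≠ γ w := by
  unfold colSet
  simp only [Finset.mem_filter, Fintype.mem_piFinset]

lemma mk_mem (L : V5 → Finset ℕ) (c1 c2 : ℕ) (f : Fin 3 → ℕ)
    (h1 : c1 ∈ L (.inl 0)) (h2 : c2 ∈ L (.inl 1))
    (hf : ∀ j, f j ∈ L (.inr j)) (hfc : ∀ j, f j ≠ c1 ∧ f j ≠ c2) :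
    Sum.elim ![c1, c2] f ∈ colSet L := by
  rw [mem_colSet_iff]
  constructor
  · rintro (i | j)
    · fin_cases i <;> simpa
    · simpa using hf j
  · rintro (i | j) (i' | j') hadj
    · simp [completeBipartiteGraph] at hadj
    · fin_cases i <;> simp
      · exact fun h => ((hfc j').1 h.symm).elim
      · exact fun h => ((hfc j').2 h.symm).elim
    · fin_cases i' <;> simp
      · exact (hfc j).1
      · exact (hfc j).2
    · simp [completeBipartiteGraph] at hadj

end Aux

section Aux2

lemma two_of_pairs (L : V5 → Finset ℕ)
    (c1 c2 d1 d2 : ℕ) (hc1 : c1 ∈ L (.inl 0)) (hc2 : c2 ∈ L (.inl 1))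
    (hd1 : d1 ∈ L (.inl 0)) (hd2 : d2 ∈ L (.inl 1))
    (hvc : ∀ j, (L (.inr j) \ {c1, c2}).Nonempty)
    (hvd : ∀ j, (L (.inr j) \ {d1, d2}).Nonempty)
    (hne : c1 ≠ d1) : 2 ≤ colCount G5 L := by
  rw [colCount_eq]
  refine Finset.one_lt_card.mpr ?_
  set f := fun j => (L (.inr j) \ {c1, c2}).min' (hvc j) with hf
  set g := fun j => (L (.inr j) \ {d1, d2}).min' (hvd j) with hg
  have hfm : ∀ j, f j ∈ L (.inr j) ∧ (f j ≠ c1 ∧ f j ≠ c2) := by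
    intro j
    have := Finset.min'_mem _ (hvc j)
    rw [Finset.mem_sdiff] at this
    refine ⟨this.1, ?_⟩
    have := this.2
    simp only [Finset.mem_insert, Finset.mem_singleton] at this
    tauto
  have hgm : ∀ j, g j ∈ L (.inr j) ∧ (g j ≠ d1 ∧ g j ≠ d2) := by
    intro j
    have := Finset.min'_mem _ (hvd j)
    rw [Finset.mem_sdiff] at this
    refine ⟨this.1, ?_⟩
    have := this.2
    simp only [Finset.mem_insert, Finset.mem_singleton] at this
    tauto
  refine ⟨Sum.elim ![c1, c2] f, mk_mem L c1 c2 f hc1 hc2 (fun j => (hfm j).1) (fun j => (hfm j).2),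
    Sum.elim ![d1, d2] g, mk_mem L d1 d2 g hd1 hd2 (fun j => (hgm j).1) (fun j => (hgm j).2), ?_⟩
  intro h
  have := congrFun h (Sum.inl 0)
  simp at this
  exact hne this

lemma two_of_freeb (L : V5 → Finset ℕ)
    (c1 c2 : ℕ) (hc1 : c1 ∈ L (.inl 0)) (hc2 : c2 ∈ L (.inl 1))
    (hv : ∀ j, (L (.inr j) \ {c1, c2}).Nonempty)
    (j0 : Fin 3) (d1 d2 : ℕ) (hLj : L (.inr j0) = {d1, d2}) (hdd : d1 ≠ d2)
    (h11 : d1 ≠ c1) (h12 : d1 ≠ c2) (h21 : d2 ≠ c1) (h22 : d2 ≠ c2) :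
    2 ≤ colCount G5 L := by
  rw [colCount_eq]
  refine Finset.one_lt_card.mpr ?_
  set f := fun j => if j = j0 then d1 else (L (.inr j) \ {c1, c2}).min' (hv j) with hf
  set g := fun j => if j = j0 then d2 else (L (.inr j) \ {c1, c2}).min' (hv j) with hg
  have hmin : ∀ j, ((L (.inr j) \ ({c1, c2} : Finset ℕ)).min' (hv j) ∈ L (.inr j)) ∧
      ((L (.inr j) \ ({c1, c2} : Finset ℕ)).min' (hv j) ≠ c1 ∧
        (L (.inr j) \ ({c1, c2} : Finset ℕ)).min' (hv j) ≠ c2) := by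
    intro j
    have := Finset.min'_mem _ (hv j)
    rw [Finset.mem_sdiff] at this
    refine ⟨this.1, ?_⟩
    have := this.2
    simp only [Finset.mem_insert, Finset.mem_singleton] at this
    tauto
  have hfm : ∀ j, f j ∈ L (.inr j) ∧ (f j ≠ c1 ∧ f j ≠ c2) := by
    intro j
    rw [hf]
    by_cases hj : j = j0
    · subst hj
      simp [hLj]
      exact ⟨h11, h12⟩
    · simp only [if_neg hj]
      exact hmin j
  have hgm : ∀ j, g j ∈ L (.inr j) ∧ (g j ≠ c1 ∧ g j ≠ c2) := by
    intro j
    rw [hg]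
    by_cases hj : j = j0
    · subst hj
      simp [hLj]
      exact ⟨h21, h22⟩
    · simp only [if_neg hj]
      exact hmin j
  refine ⟨Sum.elim ![c1, c2] f, mk_mem L c1 c2 f hc1 hc2 (fun j => (hfm j).1) (fun j => (hfm j).2),
    Sum.elim ![c1, c2] g, mk_mem L c1 c2 g hc1 hc2 (fun j => (hgm j).1) (fun j => (hgm j).2), ?_⟩
  intro h
  have := congrFun h (Sum.inr j0)
  simp [hf, hg] at this
  exact hdd this

lemma pair_eq_contra {a b c d : ℕ} (h : ({a, b} : Finset ℕ) = {c, d})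
    (h1 : a ≠ c) (h2 : a ≠ d) : False := by
  have : a ∈ ({c, d} : Finset ℕ) := by rw [← h]; simp
  simp only [Finset.mem_insert, Finset.mem_singleton] at this
  tauto

lemma pair_eq_contra' {a b c d : ℕ} (h : ({a, b} : Finset ℕ) = {c, d})
    (h1 : b ≠ c) (h2 : b ≠ d) : False :=
  pair_eq_contra (h ▸ Finset.pair_comm b a) h1 h2

end Aux2

lemma key (L : V5 → Finset ℕ) (hL : ∀ v, (L v).card = 2) : 2 ≤ colCount G5 L := by
  classical
  have hdiag : ∀ (c : ℕ) (j : Fin 3), (L (.inr j) \ {c, c}).Nonempty := by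
    intro c j
    rw [Finset.sdiff_nonempty]
    intro hsub
    have h1 : ({c, c} : Finset ℕ) = {c} := by simp
    have := Finset.card_le_card hsub
    rw [h1, hL] at this
    simp at this
  have hinv : ∀ (a b : ℕ) (j : Fin 3), ¬(L (.inr j) \ {a, b}).Nonempty →
      L (.inr j) = {a, b} := by
    intro a b j h
    rw [Finset.sdiff_nonempty, not_not] at h
    refine Finset.eq_of_subset_of_card_le h ?_
    rw [hL]
    exact (Finset.card_insert_le _ _).trans (by simp)
  by_cases hint : ∃ c, c ∈ L (.inl 0) ∧ c ∈ L (.inl 1)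
  · obtain ⟨c, hcA, hcB⟩ := hint
    by_cases hfree : ∃ j, c ∉ L (.inr j)
    · obtain ⟨j0, hj0⟩ := hfree
      obtain ⟨d1, d2, hdd, hLj⟩ := Finset.card_eq_two.mp (hL (.inr j0))
      have h1 : d1 ≠ c := by rintro rfl; exact hj0 (by rw [hLj]; simp)
      have h2 : d2 ≠ c := by rintro rfl; exact hj0 (by rw [hLj]; simp)
      exact two_of_freeb L c c hcA hcB (hdiag c) j0 d1 d2 hLj hdd h1 h1 h2 h2
    · push_neg at hfree
      obtain ⟨x1, x2, hx12, hA⟩ := Finset.card_eq_two.mp (hL (.inl 0))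
      obtain ⟨y1, y2, hy12, hB⟩ := Finset.card_eq_two.mp (hL (.inl 1))
      have hx : ∃ x, x ∈ L (.inl 0) ∧ x ≠ c := by
        have hcA' := hcA
        rw [hA] at hcA'
        simp only [Finset.mem_insert, Finset.mem_singleton] at hcA'
        rcases hcA' with rfl | rfl
        · exact ⟨x2, by rw [hA]; simp, hx12.symm⟩
        · exact ⟨x1, by rw [hA]; simp, hx12⟩
      have hy : ∃ y, y ∈ L (.inl 1) ∧ y ≠ c := by
        have hcB' := hcB
        rw [hB] at hcB'
        simp only [Finset.mem_insert, Finset.mem_singleton] at hcB'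
        rcases hcB' with rfl | rfl
        · exact ⟨y2, by rw [hB]; simp, hy12.symm⟩
        · exact ⟨y1, by rw [hB]; simp, hy12⟩
      obtain ⟨x, hxA, hxc⟩ := hx
      obtain ⟨y, hyB, hyc⟩ := hy
      have hvxy : ∀ j, (L (.inr j) \ {x, y}).Nonempty := by
        intro j
        refine ⟨c, ?_⟩
        rw [Finset.mem_sdiff]
        refine ⟨hfree j, ?_⟩
        simp only [Finset.mem_insert, Finset.mem_singleton]
        push_neg
        exact ⟨fun h => hxc h.symm, fun h => hyc h.symm⟩
      exact two_of_pairs L x y c c hxA hyB hcA hcB hvxy (hdiag c) hxc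
  · push_neg at hint
    obtain ⟨x1, x2, hx12, hA⟩ := Finset.card_eq_two.mp (hL (.inl 0))
    obtain ⟨y1, y2, hy12, hB⟩ := Finset.card_eq_two.mp (hL (.inl 1))
    have hx1A : x1 ∈ L (.inl 0) := by rw [hA]; simp
    have hx2A : x2 ∈ L (.inl 0) := by rw [hA]; simp
    have hy1B : y1 ∈ L (.inl 1) := by rw [hB]; simp
    have hy2B : y2 ∈ L (.inl 1) := by rw [hB]; simp
    have n11 : x1 ≠ y1 := fun h => hint x1 hx1A (h ▸ hy1B)
    have n12 : x1 ≠ y2 := fun h => hint x1 hx1A (h ▸ hy2B)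
    have n21 : x2 ≠ y1 := fun h => hint x2 hx2A (h ▸ hy1B)
    have n22 : x2 ≠ y2 := fun h => hint x2 hx2A (h ▸ hy2B)
    by_cases h11 : ∀ j, (L (.inr j) \ {x1, y1}).Nonempty
    · by_cases h22 : ∀ j, (L (.inr j) \ {x2, y2}).Nonempty
      · exact two_of_pairs L x1 y1 x2 y2 hx1A hy1B hx2A hy2B h11 h22 hx12
      · obtain ⟨j0, hj0⟩ := not_forall.mp h22
        have hE := hinv x2 y2 j0 hj0
        exact two_of_freeb L x1 y1 hx1A hy1B h11 j0 x2 y2 hE n22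
          hx12.symm n21 n12.symm hy12.symm
    · obtain ⟨j1, hj1⟩ := not_forall.mp h11
      have hE1 := hinv x1 y1 j1 hj1
      by_cases h22 : ∀ j, (L (.inr j) \ {x2, y2}).Nonempty
      · exact two_of_freeb L x2 y2 hx2A hy2B h22 j1 x1 y1 hE1 n11
          hx12 n12 n21.symm hy12
      · obtain ⟨j2, hj2⟩ := not_forall.mp h22
        have hE2 := hinv x2 y2 j2 hj2
        by_cases h12 : ∀ j, (L (.inr j) \ {x1, y2}).Nonempty
        · by_cases h21 : ∀ j, (L (.inr j) \ {x2, y1}).Nonempty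
          · exact two_of_pairs L x1 y2 x2 y1 hx1A hy2B hx2A hy1B h12 h21 hx12
          · obtain ⟨j4, hj4⟩ := not_forall.mp h21
            have hE4 := hinv x2 y1 j4 hj4
            exact two_of_freeb L x1 y2 hx1A hy2B h12 j4 x2 y1 hE4 n21
              hx12.symm n22 n11.symm hy12
        · obtain ⟨j3, hj3⟩ := not_forall.mp h12
          have hE3 := hinv x1 y2 j3 hj3
          by_cases h21 : ∀ j, (L (.inr j) \ {x2, y1}).Nonempty
          · exact two_of_freeb L x2 y1 hx2A hy1B h21 j3 x1 y2 hE3 n12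
              hx12 n11 n22.symm hy12.symm
          · obtain ⟨j4, hj4⟩ := not_forall.mp h21
            have hE4 := hinv x2 y1 j4 hj4
            exfalso
            have hj : j1 = j2 ∨ j1 = j3 ∨ j1 = j4 ∨ j2 = j3 ∨ j2 = j4 ∨ j3 = j4 := by
              omega
            rcases hj with h | h | h | h | h | h
            · exact pair_eq_contra (hE1.symm.trans (h ▸ hE2)) hx12 n12
            · exact pair_eq_contra' (hE1.symm.trans (h ▸ hE3)) n11.symm hy12
            · exact pair_eq_contra (hE1.symm.trans (h ▸ hE4)) hx12 n11
            · exact pair_eq_contra (hE2.symm.trans (h ▸ hE3)) hx12.symm n22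
            · exact pair_eq_contra' (hE2.symm.trans (h ▸ hE4)) n22.symm hy12.symm
            · exact pair_eq_contra (hE3.symm.trans (h ▸ hE4)) hx12 n11

lemma const_le : colCount G5 (fun _ => Finset.Icc 1 2) ≤ 2 := by
  classical
  rw [colCount_eq]
  have hsub : colSet (fun _ => Finset.Icc 1 2) ⊆
      {Sum.elim (fun _ => 1) (fun _ => 2), Sum.elim (fun _ => 2) (fun _ => 1)} := by
    intro γ hγ
    rw [mem_colSet_iff] at hγ
    obtain ⟨hmem, hprop⟩ := hγ
    have hval : ∀ v, γ v = 1 ∨ γ v = 2 := by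
      intro v
      have := hmem v
      simp only [Finset.mem_Icc] at this
      omega
    have hadj : ∀ i j, γ (.inl i) ≠ γ (.inr j) := by
      intro i j
      exact hprop _ _ (by simp [completeBipartiteGraph])
    simp only [Finset.mem_insert, Finset.mem_singleton]
    rcases hval (.inl 0) with h0 | h0
    · have hr : ∀ j, γ (.inr j) = 2 := by
        intro j
        rcases hval (.inr j) with h | h
        · exact absurd (h0.trans h.symm) (hadj 0 j)
        · exact h
      have hl : ∀ i, γ (.inl i) = 1 := by
        intro i
        rcases hval (.inl i) with h | h
        · exact h
        · exact absurd (h.trans (hr 0).symm) (hadj i 0)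
      left
      funext v
      rcases v with i | j
      · simpa using hl i
      · simpa using hr j
    · have hr : ∀ j, γ (.inr j) = 1 := by
        intro j
        rcases hval (.inr j) with h | h
        · exact h
        · exact absurd (h0.trans h.symm) (hadj 0 j)
      have hl : ∀ i, γ (.inl i) = 2 := by
        intro i
        rcases hval (.inl i) with h | h
        · exact absurd (h.trans (hr 0).symm) (hadj i 0)
        · exact h
      right
      funext v
      rcases v with i | j
      · simpa using hl i
      · simpa using hr j
  exact (Finset.card_le_card hsub).trans ((Finset.card_insert_le _ _).trans (by simp))

theorem stmt12 :
    Monophilic (completeBipartiteGraph (Fin 2) (Fin 3)) 2 ∧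
      ∀ L : Fin 2 ⊕ Fin 3 → Finset ℕ, (∀ v, (L v).card = 2) →
        2 ≤ colCount (completeBipartiteGraph (Fin 2) (Fin 3)) L := by
  refine ⟨?_, key⟩
  intro L hL
  exact le_trans const_le (key L hL)
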